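/- Define π₁ = 1/(1 + B(1+ρ)) if ρ = β, and π₁ = ρ^B(β−ρ) / (ρ^B(β−ρ) + β(1+ρ)(β^B − ρ^B)) if ρ ≠ β; and for 1 ≤ i ≤ B set π_{2i} = (β/ρ)^i · π₁ and π_{2i+1} = ρ·(β/ρ)^i · π₁. Then these numbers satisfy all of the listed global balance equations together with the normalization Σ_{i=1}^{2B+1} π_i = 1. -/

import Mathlib

lemma sum_split_aux (f : ℕ → ℝ) (B : ℕ) :
    ∑ i ∈ Finset.Icc 1 (2 * B + 1), f i
      = f 1 + ∑ i ∈ Finset.Icc 1 B, (f (2 * i) + f (2 * i + 1)) := by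
  induction B with
  | zero => simp
  | succ n ih =>
    have h1 : 2 * (n + 1) + 1 = (2 * n + 1) + 1 + 1 := by ring
    rw [h1, Finset.sum_Icc_succ_top (by omega), Finset.sum_Icc_succ_top (by omega),
      Finset.sum_Icc_succ_top (by omega : 1 ≤ n + 1), ih]
    have h2 : 2 * n + 1 + 1 = 2 * (n + 1) := by ring
    rw [h2]
    ring

lemma geo_aux (r : ℝ) (B : ℕ) :
    (r - 1) * ∑ i ∈ Finset.Icc 1 B, r ^ i = r ^ (B + 1) - r := by
  induction B with
  | zero => simp
  | succ n ih =>
    rw [Finset.sum_Icc_succ_top (by omega : 1 ≤ n + 1), mul_add, ih, pow_succ]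
    ring

theorem stmt_0 (lam eta mu : ℝ) (hlam : 0 < lam) (heta : 0 < eta) (hmu : 0 < mu)
    (B : ℕ) (hB : 2 ≤ B)
    (rho beta : ℝ) (hrho : rho = lam / mu) (hbeta : beta = eta / mu)
    (pi1 : ℝ)
    (hpi1 : pi1 = if rho = beta then 1 / (1 + (B : ℝ) * (1 + rho))
      else rho ^ B * (beta - rho) /
        (rho ^ B * (beta - rho) + beta * (1 + rho) * (beta ^ B - rho ^ B)))
    (pi : ℕ → ℝ)
    (hp1 : pi 1 = pi1)
    (hpeven : ∀ i, 1 ≤ i → i ≤ B → pi (2 * i) = (beta / rho) ^ i * pi1)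
    (hpodd : ∀ i, 1 ≤ i → i ≤ B → pi (2 * i + 1) = rho * (beta / rho) ^ i * pi1) :
    eta * pi 1 = mu * pi 3 ∧
    (eta + lam) * pi 2 = eta * pi 1 + mu * pi 5 ∧
    (∀ i, 2 ≤ i → i ≤ B - 1 →
      (eta + lam) * pi (2 * i) = eta * pi (2 * i - 2) + mu * pi (2 * i + 3)) ∧
    lam * pi (2 * B) = eta * pi (2 * B - 2) ∧
    (∀ i, 1 ≤ i → i ≤ B → mu * pi (2 * i + 1) = lam * pi (2 * i)) ∧
    ∑ i ∈ Finset.Icc 1 (2 * B + 1), pi i = 1 := by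
  have hmu0 : mu ≠ 0 := ne_of_gt hmu
  have hrho0 : 0 < rho := by rw [hrho]; positivity
  have hbeta0 : 0 < beta := by rw [hbeta]; positivity
  have hrhone : rho ≠ 0 := ne_of_gt hrho0
  have hbetane : beta ≠ 0 := ne_of_gt hbeta0
  have hlam' : lam = rho * mu := by rw [hrho, div_mul_cancel₀ _ hmu0]
  have heta' : eta = beta * mu := by rw [hbeta, div_mul_cancel₀ _ hmu0]
  set r : ℝ := beta / rho with hr
  refine ⟨?_, ?_, ?_, ?_, ?_, ?_⟩
  · -- eta * pi 1 = mu * pi 3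
    have h3 : pi 3 = rho * r ^ 1 * pi1 := hpodd 1 le_rfl (by omega)
    rw [hp1, h3, heta', hr]
    field_simp
  · -- (eta+lam)*pi 2 = eta*pi 1 + mu*pi 5
    have h2 : pi 2 = r ^ 1 * pi1 := hpeven 1 le_rfl (by omega)
    have h5 : pi 5 = rho * r ^ 2 * pi1 := hpodd 2 (by omega) hB
    rw [hp1, h2, h5, hlam', heta', hr]
    field_simp
    ring
  · intro i h2i hiB
    obtain ⟨j, rfl⟩ : ∃ j, i = j + 1 := ⟨i - 1, by omega⟩
    have e1 : 2 * (j + 1) - 2 = 2 * j := by omega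
    have e2 : 2 * (j + 1) + 3 = 2 * (j + 2) + 1 := by omega
    have hA : pi (2 * (j + 1)) = r ^ (j + 1) * pi1 := hpeven _ (by omega) (by omega)
    have hBb : pi (2 * j) = r ^ j * pi1 := hpeven _ (by omega) (by omega)
    have hC : pi (2 * (j + 2) + 1) = rho * r ^ (j + 2) * pi1 :=
      hpodd _ (by omega) (by omega)
    rw [e1, e2, hA, hBb, hC, hlam', heta', hr, pow_succ, pow_succ, pow_succ]
    field_simp
    ring
  · -- lam * pi (2B) = eta * pi (2B-2)
    obtain ⟨j, rfl⟩ : ∃ j, B = j + 1 := ⟨B - 1, by omega⟩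
    have e1 : 2 * (j + 1) - 2 = 2 * j := by omega
    have hA : pi (2 * (j + 1)) = r ^ (j + 1) * pi1 := hpeven _ (by omega) le_rfl
    have hBb : pi (2 * j) = r ^ j * pi1 := hpeven _ (by omega) (by omega)
    rw [e1, hA, hBb, hlam', heta', hr, pow_succ]
    field_simp
  · intro i h1 h2
    rw [hpeven i h1 h2, hpodd i h1 h2, hlam']
    ring
  · -- normalization
    rw [sum_split_aux]
    have hsum : ∑ i ∈ Finset.Icc 1 B, (pi (2 * i) + pi (2 * i + 1))
        = (1 + rho) * pi1 * ∑ i ∈ Finset.Icc 1 B, r ^ i := by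
      rw [Finset.mul_sum]
      apply Finset.sum_congr rfl
      intro i hi
      rw [Finset.mem_Icc] at hi
      rw [hpeven i hi.1 hi.2, hpodd i hi.1 hi.2]
      ring
    rw [hp1, hsum]
    by_cases hcase : rho = beta
    · have hr1 : r = 1 := by rw [hr, ← hcase, div_self hrhone]
      have : ∑ i ∈ Finset.Icc 1 B, r ^ i = (B : ℝ) := by
        simp [hr1, Nat.card_Icc]
      rw [this, hpi1, if_pos hcase]
      have hden : (1 : ℝ) + (B : ℝ) * (1 + rho) ≠ 0 := by positivity
      field_simp
    · have hrne1 : r - 1 ≠ 0 := by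
        rw [hr]
        intro h
        apply hcase
        have : beta / rho = 1 := by linarith
        field_simp at this
        exact this.symm
      have hbr : beta - rho ≠ 0 := sub_ne_zero.mpr (fun h => hcase h.symm)
      have hgeo := geo_aux r B
      have hS : ∑ i ∈ Finset.Icc 1 B, r ^ i
          = beta * (beta ^ B - rho ^ B) / (rho ^ B * (beta - rho)) := by
        have h2 : ∑ i ∈ Finset.Icc 1 B, r ^ i = (r ^ (B + 1) - r) / (r - 1) := by
          rw [eq_div_iff hrne1]; linarith [hgeo]
        rw [h2, hr, div_pow]
        rw [div_eq_div_iff (by rw [← hr]; exact hrne1)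
          (mul_ne_zero (pow_ne_zero _ hrhone) hbr)]
        field_simp
        ring
      rw [hS, hpi1, if_neg hcase]
      have hD : rho ^ B * (beta - rho) + beta * (1 + rho) * (beta ^ B - rho ^ B) ≠ 0 := by
        rcases lt_or_gt_of_ne (fun h => hcase h) with h | h
        · have h1 : 0 < rho ^ B * (beta - rho) := by
            apply mul_pos (by positivity); linarith
          have h2 : 0 ≤ beta * (1 + rho) * (beta ^ B - rho ^ B) := by
            apply mul_nonneg (by positivity)
            have := pow_le_pow_left₀ (le_of_lt hrho0) (le_of_lt h) B
            linarith
          linarith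
        · have h1 : rho ^ B * (beta - rho) < 0 := by
            apply mul_neg_of_pos_of_neg (by positivity); linarith
          have h2 : beta * (1 + rho) * (beta ^ B - rho ^ B) ≤ 0 := by
            apply mul_nonpos_of_nonneg_of_nonpos (by positivity)
            have := pow_le_pow_left₀ (le_of_lt hbeta0) (le_of_lt h) B
            linarith
          linarith
      have hN : rho ^ B * (beta - rho) ≠ 0 := mul_ne_zero (pow_ne_zero _ hrhone) hbr
      field_simp
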